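/- Let U(t) be a strongly continuous one-parameter unitary group with positive generator on a Hilbert space H, with (up to scalars) unique invariant vector Ω. Suppose A, B are bounded operators such that B commutes with U(t) A U(t)* for all t ∈ ℝ. Then ⟨A*Ω, B Ω⟩ = ⟨A*Ω, Ω⟩⟨Ω, BΩ⟩, provided U(t) → |Ω⟩⟨Ω| weakly as t → ∞. -/

import Mathlib

open Filter Topology

open Complex intervalIntegral in
private lemma rect_zero (h : ℂ → ℂ) (hc : Continuous h)
    (hd : ∀ z : ℂ, z.im ≠ 0 → DifferentiableAt ℂ h z) (a b c d : ℝ) :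
    (∫ x : ℝ in a..b, h (x + c * I)) - (∫ x : ℝ in a..b, h (x + d * I)) +
      I • (∫ y : ℝ in c..d, h (b + y * I)) -
      I • (∫ y : ℝ in c..d, h (a + y * I)) = 0 := by
  have half : ∀ c d : ℝ, (0 : ℝ) ∉ Set.Ioo (min c d) (max c d) →
      (∫ x : ℝ in a..b, h (x + c * I)) - (∫ x : ℝ in a..b, h (x + d * I)) +
        I • (∫ y : ℝ in c..d, h (b + y * I)) -
        I • (∫ y : ℝ in c..d, h (a + y * I)) = 0 := by
    intro c d h0
    exact Complex.integral_boundary_rect_eq_zero_of_continuousOn_of_differentiableOn h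
      ⟨a, c⟩ ⟨b, d⟩ hc.continuousOn
      (fun z hz => (hd z (fun him => h0 (him ▸ hz.2))).differentiableWithinAt)
  have h1 := half c 0 (by
    rintro ⟨p, q⟩
    rcases min_lt_iff.1 p with p1 | p1 <;> rcases lt_max_iff.1 q with q1 | q1 <;> linarith)
  have h2 := half 0 d (by
    rintro ⟨p, q⟩
    rcases min_lt_iff.1 p with p1 | p1 <;> rcases lt_max_iff.1 q with q1 | q1 <;> linarith)
  have intg : ∀ e : ℝ, ∀ u v : ℝ, IntervalIntegrable (fun y : ℝ => h (e + y * I)) MeasureTheory.volume u v :=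
    fun e u v => (hc.comp (by continuity)).intervalIntegrable u v
  have addb := integral_add_adjacent_intervals (intg b c 0) (intg b 0 d)
  have adda := integral_add_adjacent_intervals (intg a c 0) (intg a 0 d)
  simp only [smul_eq_mul] at h1 h2 ⊢
  linear_combination h1 + h2 - Complex.I * addb + Complex.I * adda

open Complex intervalIntegral in
private lemma morera_glue (h : ℂ → ℂ) (hc : Continuous h)
    (hd : ∀ z : ℂ, z.im ≠ 0 → DifferentiableAt ℂ h z) :
    Differentiable ℂ h := by
  set Φ : ℂ → ℂ := fun w =>
    (∫ x : ℝ in (0:ℝ)..w.re, h x) + I • ∫ y : ℝ in (0:ℝ)..w.im, h (w.re + y * I) with hΦdef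
  have inth : ∀ e : ℝ, ∀ u v : ℝ,
      IntervalIntegrable (fun y : ℝ => h (e + y * I)) MeasureTheory.volume u v :=
    fun e u v => (hc.comp (by continuity)).intervalIntegrable u v
  have inthx : ∀ (e : ℝ) (u v : ℝ),
      IntervalIntegrable (fun x : ℝ => h (x + e * I)) MeasureTheory.volume u v :=
    fun e u v => (hc.comp (by continuity)).intervalIntegrable u v
  have key : ∀ z : ℂ, HasDerivAt Φ (h z) z := by
    intro z
    have diff_eq : ∀ w : ℂ, Φ w - Φ z =
        (∫ x : ℝ in z.re..w.re, h (x + z.im * I)) +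
          I • ∫ y : ℝ in z.im..w.im, h (w.re + y * I) := by
      intro w
      have rz := rect_zero h hc hd z.re w.re 0 z.im
      have e0 : ∀ x : ℝ, ((x : ℂ) + (0:ℝ) * I) = (x : ℂ) := by intro x; push_cast; ring
      simp only [e0] at rz
      have inthr : ∀ u v : ℝ, IntervalIntegrable (fun x : ℝ => h x) MeasureTheory.volume u v :=
        fun u v => (hc.comp (by continuity : Continuous fun x : ℝ => (x : ℂ))).intervalIntegrable u v
      have addx := integral_add_adjacent_intervals (inthr 0 z.re) (inthr z.re w.re)
      have addy := integral_add_adjacent_intervals (inth w.re 0 z.im) (inth w.re z.im w.im)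
      simp only [hΦdef, smul_eq_mul] at *
      linear_combination rz - addx - Complex.I * addy
    rw [hasDerivAt_iff_isLittleO]
    rw [Asymptotics.isLittleO_iff]
    intro ε hε
    have hεc : ∀ᶠ w in 𝓝 z, ∀ u : ℂ, ‖u - z‖ ≤ 2 * ‖w - z‖ → ‖h u - h z‖ ≤ ε / 2 := by
      rcases Metric.continuousAt_iff.1 hc.continuousAt (ε/2) (by positivity) with ⟨δ, hδ, hδ2⟩
      filter_upwards [Metric.ball_mem_nhds z (show (0:ℝ) < δ/4 by positivity)] with w hw u hu
      have : dist u z < δ := by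
        have : ‖w - z‖ < δ / 4 := by simpa [dist_eq_norm] using hw
        calc dist u z = ‖u - z‖ := dist_eq_norm u z
          _ ≤ 2 * ‖w - z‖ := hu
          _ < δ := by linarith
      exact le_of_lt (by simpa [dist_eq_norm] using hδ2 this)
    filter_upwards [hεc] with w hw
    rw [diff_eq w]
    have hre : |w.re - z.re| ≤ ‖w - z‖ := by
      simpa [Complex.sub_re] using Complex.abs_re_le_norm (w - z)
    have him : |w.im - z.im| ≤ ‖w - z‖ := by
      simpa [Complex.sub_im] using Complex.abs_im_le_norm (w - z)
    have b1 : ‖∫ x : ℝ in z.re..w.re, (h (x + z.im * I) - h z)‖ ≤ ε/2 * |w.re - z.re| := by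
      apply intervalIntegral.norm_integral_le_of_norm_le_const
      intro x hx
      apply hw
      have hxb : |x - z.re| ≤ |w.re - z.re| := by
        rcases Set.mem_uIoc.1 hx with ⟨p, q⟩ | ⟨p, q⟩ <;>
          · rw [abs_le]; constructor <;> cases abs_cases (w.re - z.re) <;> linarith [abs_nonneg (w.re - z.re)]
      have : ((x : ℂ) + z.im * I) - z = ((x - z.re : ℝ) : ℂ) := by
        apply Complex.ext <;> simp
      rw [this]
      calc ‖((x - z.re : ℝ) : ℂ)‖ = |x - z.re| := by rw [Complex.norm_real, Real.norm_eq_abs]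
        _ ≤ |w.re - z.re| := hxb
        _ ≤ ‖w - z‖ := hre
        _ ≤ 2 * ‖w - z‖ := by nlinarith [norm_nonneg (w - z)]
    have b2 : ‖∫ y : ℝ in z.im..w.im, (h (w.re + y * I) - h z)‖ ≤ ε/2 * |w.im - z.im| := by
      apply intervalIntegral.norm_integral_le_of_norm_le_const
      intro y hy
      apply hw
      have hyb : |y - z.im| ≤ |w.im - z.im| := by
        rcases Set.mem_uIoc.1 hy with ⟨p, q⟩ | ⟨p, q⟩ <;>
          · rw [abs_le]; constructor <;> cases abs_cases (w.im - z.im) <;> linarith [abs_nonneg (w.im - z.im)]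
      have : ((w.re : ℂ) + y * I) - z = ((w.re - z.re : ℝ) : ℂ) + ((y - z.im : ℝ) : ℂ) * I := by
        apply Complex.ext <;> simp
      rw [this]
      calc ‖((w.re - z.re : ℝ) : ℂ) + ((y - z.im : ℝ) : ℂ) * I‖
          ≤ ‖((w.re - z.re : ℝ) : ℂ)‖ + ‖((y - z.im : ℝ) : ℂ) * I‖ := norm_add_le _ _
        _ = |w.re - z.re| + |y - z.im| := by
            rw [norm_mul, Complex.norm_I, mul_one, Complex.norm_real, Complex.norm_real,
              Real.norm_eq_abs, Real.norm_eq_abs]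
        _ ≤ ‖w - z‖ + |w.im - z.im| := by linarith
        _ ≤ 2 * ‖w - z‖ := by linarith
    have i1 : IntervalIntegrable (fun x : ℝ => h (x + z.im * I) - h z) MeasureTheory.volume z.re w.re :=
      (inthx z.im z.re w.re).sub (intervalIntegrable_const)
    have i2 : IntervalIntegrable (fun y : ℝ => h (w.re + y * I) - h z) MeasureTheory.volume z.im w.im :=
      (inth w.re z.im w.im).sub (intervalIntegrable_const)
    have split1 : (∫ x : ℝ in z.re..w.re, h (x + z.im * I))
        = (∫ x : ℝ in z.re..w.re, (h (x + z.im * I) - h z)) + (w.re - z.re) • h z := by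
      rw [intervalIntegral.integral_sub (inthx z.im z.re w.re) intervalIntegrable_const,
        intervalIntegral.integral_const]
      abel
    have split2 : (∫ y : ℝ in z.im..w.im, h (w.re + y * I))
        = (∫ y : ℝ in z.im..w.im, (h (w.re + y * I) - h z)) + (w.im - z.im) • h z := by
      rw [intervalIntegral.integral_sub (inth w.re z.im w.im) intervalIntegrable_const,
        intervalIntegral.integral_const]
      abel
    rw [split1, split2]
    have wz : (w - z) • h z = ((w.re - z.re : ℝ) : ℂ) * h z + I * (((w.im - z.im : ℝ) : ℂ) * h z) := by
      rw [smul_eq_mul]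
      have : (w - z) = ((w.re - z.re : ℝ) : ℂ) + ((w.im - z.im : ℝ) : ℂ) * I := by
        apply Complex.ext <;> simp
      rw [this]; ring
    have arrange : (∫ x : ℝ in z.re..w.re, (h (x + z.im * I) - h z)) + (w.re - z.re) • h z
        + I • ((∫ y : ℝ in z.im..w.im, (h (w.re + y * I) - h z)) + (w.im - z.im) • h z)
        - (w - z) • h z
        = (∫ x : ℝ in z.re..w.re, (h (x + z.im * I) - h z))
          + I • (∫ y : ℝ in z.im..w.im, (h (w.re + y * I) - h z)) := by
      simp only [smul_eq_mul, real_smul] at *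
      rw [wz]; push_cast; ring
    rw [arrange]
    calc ‖(∫ x : ℝ in z.re..w.re, (h (x + z.im * I) - h z))
          + I • (∫ y : ℝ in z.im..w.im, (h (w.re + y * I) - h z))‖
        ≤ ‖(∫ x : ℝ in z.re..w.re, (h (x + z.im * I) - h z))‖
          + ‖I • (∫ y : ℝ in z.im..w.im, (h (w.re + y * I) - h z))‖ := norm_add_le _ _
      _ ≤ ε/2 * |w.re - z.re| + ε/2 * |w.im - z.im| := by
          rw [norm_smul, Complex.norm_I, one_mul]; exact add_le_add b1 b2
      _ ≤ ε/2 * ‖w - z‖ + ε/2 * ‖w - z‖ := by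
          have := hre; have := him
          have hε2 : (0:ℝ) ≤ ε/2 := by positivity
          nlinarith
      _ = ε * ‖w - z‖ := by ring
  have hΦ : Differentiable ℂ Φ := fun z => (key z).differentiableAt
  have hder : deriv Φ = h := funext fun z => (key z).deriv
  rw [← hder]
  exact analyticOnNhd_univ_iff_differentiable.mp
    ((analyticOnNhd_univ_iff_differentiable.mpr hΦ).deriv)


/-- Cluster-type factorization from the spectrum condition.  Let `U` be a
strongly continuous one-parameter unitary group on a complex Hilbert space
`H` whose generator is positive — encoded, as is equivalent, by the property
that every matrix element `t ↦ ⟨ψ, U(t)φ⟩` is the boundary value of a bounded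
continuous function on the closed upper half-plane, analytic in its
interior — with (up to scalars) unique invariant unit vector `Ω`.  If `A, B`
are bounded operators such that `B` commutes with `U(t) A U(t)* = U(t) A U(-t)`
for all `t`, and `U(t) → |Ω⟩⟨Ω|` weakly as `t → ∞`, then
`⟨A*Ω, BΩ⟩ = ⟨A*Ω, Ω⟩ ⟨Ω, BΩ⟩`. -/
theorem cluster_factorization (H : Type*) [NormedAddCommGroup H]
    [InnerProductSpace ℂ H] [CompleteSpace H]
    (U : ℝ → H →L[ℂ] H)
    (hU0 : U 0 = ContinuousLinearMap.id ℂ H)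
    (hUgroup : ∀ s t : ℝ, U (s + t) = (U s) ∘L (U t))
    (hUiso : ∀ (t : ℝ) (x : H), ‖U t x‖ = ‖x‖)
    (hUcont : ∀ x : H, Continuous fun t : ℝ => U t x)
    (hpos : ∀ ψ φ : H, ∃ F : ℂ → ℂ,
      ContinuousOn F {z : ℂ | 0 ≤ z.im} ∧
      DifferentiableOn ℂ F {z : ℂ | 0 < z.im} ∧
      (∀ z : ℂ, 0 ≤ z.im → ‖F z‖ ≤ ‖ψ‖ * ‖φ‖) ∧
      (∀ t : ℝ, F t = (inner ℂ ψ (U t φ) : ℂ)))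
    (Ω : H) (hΩnorm : ‖Ω‖ = 1) (hΩinv : ∀ t : ℝ, U t Ω = Ω)
    (hΩuniq : ∀ ψ : H, (∀ t : ℝ, U t ψ = ψ) → ∃ c : ℂ, ψ = c • Ω)
    (A B : H →L[ℂ] H)
    (hcomm : ∀ t : ℝ,
      B ∘L ((U t) ∘L A ∘L (U (-t))) = ((U t) ∘L A ∘L (U (-t))) ∘L B)
    (hweak : ∀ ψ φ : H,
      Tendsto (fun t : ℝ => (inner ℂ ψ (U t φ) : ℂ)) atTop
        (𝓝 ((inner ℂ ψ Ω : ℂ) * (inner ℂ Ω φ : ℂ)))) :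
    (inner ℂ ((ContinuousLinearMap.adjoint A) Ω) (B Ω) : ℂ)
      = (inner ℂ ((ContinuousLinearMap.adjoint A) Ω) Ω : ℂ) * (inner ℂ Ω (B Ω) : ℂ) := by
  classical
  set A' := ContinuousLinearMap.adjoint A with hA'
  set B' := ContinuousLinearMap.adjoint B with hB'
  -- basic group facts
  have hUU : ∀ (t : ℝ) (x : H), U t (U (-t) x) = x := by
    intro t x
    have h1 : U (t + -t) = (U t) ∘L (U (-t)) := hUgroup t (-t)
    rw [add_neg_cancel, hU0] at h1
    have := congrArg (fun (T : H →L[ℂ] H) => T x) h1.symm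
    simpa using this
  have hUU' : ∀ (t : ℝ) (x : H), U (-t) (U t x) = x := by
    intro t x
    have h1 : U (-t + t) = (U (-t)) ∘L (U t) := hUgroup (-t) t
    rw [neg_add_cancel, hU0] at h1
    have := congrArg (fun (T : H →L[ℂ] H) => T x) h1.symm
    simpa using this
  have hip : ∀ (t : ℝ) (x y : H), (inner ℂ (U t x) (U t y) : ℂ) = inner ℂ x y :=
    fun t x y => LinearIsometry.inner_map_map ⟨(U t : H →ₗ[ℂ] H), hUiso t⟩ x y
  have hadj : ∀ (t : ℝ) (x y : H), (inner ℂ (U t x) y : ℂ) = inner ℂ x (U (-t) y) := by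
    intro t x y
    conv_lhs => rw [← hUU t y]
    exact hip t x (U (-t) y)
  -- pointwise commutation
  have hcomm' : ∀ (t : ℝ) (x : H), A (U (-t) (B (U t x))) = U (-t) (B (U t (A x))) := by
    intro t x
    have hh := congrArg (fun (T : H →L[ℂ] H) => T (U t x)) (hcomm t)
    simp only [ContinuousLinearMap.comp_apply] at hh
    rw [hUU'] at hh
    -- hh : B (U t (A x)) = U t (A (U (-t) (B (U t x))))
    have h2 := congrArg (U (-t)) hh
    rw [hUU'] at h2
    exact h2.symm
  have key : ∀ t : ℝ, (inner ℂ (A' Ω) (U (-t) (B Ω)) : ℂ) = inner ℂ (B' Ω) (U t (A Ω)) := by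
    intro t
    calc (inner ℂ (A' Ω) (U (-t) (B Ω)) : ℂ)
        = inner ℂ Ω (A (U (-t) (B Ω))) := ContinuousLinearMap.adjoint_inner_left A _ Ω
      _ = inner ℂ Ω (A (U (-t) (B (U t Ω)))) := by rw [hΩinv]
      _ = inner ℂ Ω (U (-t) (B (U t (A Ω)))) := by rw [hcomm']
      _ = inner ℂ (U t Ω) (B (U t (A Ω))) := (hadj t Ω _).symm
      _ = inner ℂ Ω (B (U t (A Ω))) := by rw [hΩinv]
      _ = inner ℂ (B' Ω) (U t (A Ω)) := (ContinuousLinearMap.adjoint_inner_left B _ Ω).symm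
  obtain ⟨F, hFc, hFd, hFb, hFt⟩ := hpos (B' Ω) (A Ω)
  obtain ⟨G, hGc, hGd, hGb, hGt⟩ := hpos (A' Ω) (B Ω)
  have bdry : ∀ t : ℝ, F t = G (-(t : ℂ)) := by
    intro t
    rw [hFt, show (-(t:ℂ)) = ((-t : ℝ) : ℂ) by push_cast; ring, hGt (-t)]
    exact (key t).symm
  set h : ℂ → ℂ := fun z => if 0 ≤ z.im then F z else G (-z) with hhdef
  have real_coe : ∀ z : ℂ, z.im = 0 → ((z.re : ℂ)) = z := by
    intro z hz; apply Complex.ext <;> simp [hz]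
  have hUHPclosed : IsClosed {z : ℂ | 0 ≤ z.im} :=
    isClosed_le continuous_const Complex.continuous_im
  have hLHPclosed : IsClosed {z : ℂ | z.im ≤ 0} :=
    isClosed_le Complex.continuous_im continuous_const
  have hGneg : ContinuousOn (fun z : ℂ => G (-z)) {z : ℂ | z.im ≤ 0} := by
    apply hGc.comp continuous_neg.continuousOn
    intro z hz
    simp only [Set.mem_setOf_eq, Complex.neg_im] at *
    linarith
  have hFG : ∀ z : ℂ, z.im = 0 → F z = G (-z) := by
    intro z hz
    have := bdry z.re
    rwa [real_coe z hz] at this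
  have hcont : Continuous h := by
    apply continuous_if
    · intro z hz
      have h1 : z.im = 0 := by
        have hs := frontier_subset_closure (s := {z : ℂ | 0 ≤ z.im}) hz
        rw [hUHPclosed.closure_eq] at hs
        rw [frontier] at hz
        have h2 : z ∉ interior {z : ℂ | 0 ≤ z.im} := hz.2
        have h3 : {z : ℂ | 0 < z.im} ⊆ interior {z : ℂ | 0 ≤ z.im} := by
          apply interior_maximal _ (isOpen_lt continuous_const Complex.continuous_im)
          intro w hw
          simp only [Set.mem_setOf_eq] at *
          linarith
        have h4 : ¬ (0 < z.im) := fun hlt => h2 (h3 hlt)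
        exact le_antisymm (not_lt.1 h4) hs
      exact hFG z h1
    · rw [hUHPclosed.closure_eq]; exact hFc
    · apply hGneg.mono
      apply closure_minimal _ hLHPclosed
      intro z hz
      simp only [Set.mem_setOf_eq, not_le] at hz
      exact le_of_lt hz
  have hdiff0 : ∀ z : ℂ, z.im ≠ 0 → DifferentiableAt ℂ h z := by
    intro z hz
    rcases hz.lt_or_gt with hneg | hposm
    · have hev : h =ᶠ[𝓝 z] fun w => G (-w) := by
        filter_upwards [(isOpen_lt Complex.continuous_im continuous_const).mem_nhds
          (show z ∈ {w : ℂ | w.im < 0} from hneg)] with w hw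
        simp only [hhdef]
        rw [if_neg (not_le.2 hw)]
      have hGz : DifferentiableAt ℂ G (-z) :=
        (hGd.differentiableAt ((isOpen_lt continuous_const Complex.continuous_im).mem_nhds
          (by simp only [Set.mem_setOf_eq, Complex.neg_im]; linarith)))
      exact (hGz.comp z (differentiable_neg z)).congr_of_eventuallyEq hev
    · have hev : h =ᶠ[𝓝 z] F := by
        filter_upwards [(isOpen_lt continuous_const Complex.continuous_im).mem_nhds
          (show z ∈ {w : ℂ | 0 < w.im} from hposm)] with w hw
        simp only [hhdef]
        rw [if_pos (le_of_lt hw)]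
      have hFz : DifferentiableAt ℂ F z :=
        hFd.differentiableAt ((isOpen_lt continuous_const Complex.continuous_im).mem_nhds hposm)
      exact hFz.congr_of_eventuallyEq hev
  have hdiff : Differentiable ℂ h := morera_glue h hcont hdiff0
  have hbdd : Bornology.IsBounded (Set.range h) := by
    rw [isBounded_iff_forall_norm_le]
    refine ⟨max (‖B' Ω‖ * ‖A Ω‖) (‖A' Ω‖ * ‖B Ω‖), ?_⟩
    rintro x ⟨z, rfl⟩
    simp only [hhdef]
    by_cases hz : 0 ≤ z.im
    · rw [if_pos hz]; exact le_max_of_le_left (hFb z hz)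
    · rw [if_neg hz]
      refine le_max_of_le_right (hGb (-z) ?_)
      simp only [Complex.neg_im]
      push_neg at hz
      linarith
  have hconst := hdiff.apply_eq_apply_of_bounded hbdd
  have hht : ∀ t : ℝ, h t = (inner ℂ (B' Ω) (U t (A Ω)) : ℂ) := by
    intro t
    simp only [hhdef]
    rw [if_pos (by simp : (0:ℝ) ≤ ((t:ℂ)).im)]
    exact hFt t
  have hlim := hweak (B' Ω) (A Ω)
  have hconstf : (fun t : ℝ => (inner ℂ (B' Ω) (U t (A Ω)) : ℂ)) = fun _ : ℝ => h 0 := by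
    funext t
    rw [← hht t]
    exact hconst ↑t 0
  rw [hconstf] at hlim
  have h0c : h 0 = (inner ℂ (B' Ω) Ω : ℂ) * (inner ℂ Ω (A Ω) : ℂ) :=
    tendsto_nhds_unique tendsto_const_nhds hlim
  have h0goal : h 0 = (inner ℂ (A' Ω) (B Ω) : ℂ) := by
    have h1 := hht 0
    have h2 := key 0
    rw [neg_zero, hU0] at h2
    simp only [ContinuousLinearMap.id_apply] at h2
    rw [show ((0:ℝ):ℂ) = 0 by norm_num] at h1
    rw [h1, hU0]
    simp only [ContinuousLinearMap.id_apply]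
    exact h2.symm
  rw [← h0goal, h0c, ContinuousLinearMap.adjoint_inner_left B Ω Ω,
    ← ContinuousLinearMap.adjoint_inner_left A Ω Ω]
  ring
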